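/- Let φ : S → T be a homomorphism of inverse semigroups, let e, f ∈ E(S), s ∈ S, t ∈ T, and let χ be a semi-character of E(S) with χ(s*·s) = true, χ(f) = true, and χ(s*·e·s) = true. Suppose there exists v ∈ T with v ≤ φ(s) and v ≤ t such that some x ∈ E(S) satisfies χ(x) = true and φ(x) ≤ v*·v. Then there exists s' ∈ S with s' ≤ s, s' = e·s'·f, χ(s'*·s') = true, and φ(s') ≤ t. -/

import Mathlib

class InverseSemigroup (S : Type*) extends Semigroup S, StarMul S where
  mul_star_mul_self : ∀ s : S, s * star s * s = s
  star_mul_star_self : ∀ s : S, star s * s * star s = star s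
  idem_comm : ∀ e f : S, e * e = e → f * f = f → e * f = f * e

namespace InverseSemigroup

variable {S : Type*} [InverseSemigroup S]

lemma idem_star_mul (s : S) : (star s * s) * (star s * s) = star s * s := by
  calc (star s * s) * (star s * s) = star s * (s * star s * s) := by
        simp only [mul_assoc]
    _ = star s * s := by rw [mul_star_mul_self]

lemma mul_star_idem (s : S) : (s * star s) * (s * star s) = s * star s := by
  calc (s * star s) * (s * star s) = s * (star s * s * star s) := by
        simp only [mul_assoc]
    _ = s * star s := by rw [star_mul_star_self]

lemma idem_mul {e f : S} (he : e * e = e) (hf : f * f = f) :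
    (e * f) * (e * f) = e * f := by
  have hc : f * e = e * f := idem_comm f e hf he
  calc (e * f) * (e * f) = e * (f * e) * f := by simp only [mul_assoc]
    _ = e * (e * f) * f := by rw [hc]
    _ = (e * e) * (f * f) := by simp only [mul_assoc]
    _ = e * f := by rw [he, hf]

lemma idem_conj {e : S} (he : e * e = e) (s : S) :
    (star s * e * s) * (star s * e * s) = star s * e * s := by
  have hf : (s * star s) * (s * star s) = s * star s := mul_star_idem s
  have hc : e * (s * star s) = (s * star s) * e := idem_comm e _ he hf
  calc (star s * e * s) * (star s * e * s)
      = star s * (e * (s * star s)) * (e * s) := by simp only [mul_assoc]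
    _ = star s * ((s * star s) * e) * (e * s) := by rw [hc]
    _ = star s * (s * star s) * (e * e) * s := by simp only [mul_assoc]
    _ = star s * (s * star s) * e * s := by rw [he]
    _ = (star s * s * star s) * e * s := by simp only [mul_assoc]
    _ = star s * e * s := by rw [star_mul_star_self]

lemma conj_mul {e f : S} (_he : e * e = e) (hf : f * f = f) (s : S) :
    (star s * e * s) * (star s * f * s) = star s * (e * f) * s := by
  have hss : (s * star s) * (s * star s) = s * star s := mul_star_idem s
  have hc : (s * star s) * f = f * (s * star s) := idem_comm _ _ hss hf
  calc (star s * e * s) * (star s * f * s)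
      = star s * e * ((s * star s) * f) * s := by simp only [mul_assoc]
    _ = star s * e * (f * (s * star s)) * s := by rw [hc]
    _ = star s * (e * f) * (s * star s * s) := by simp only [mul_assoc]
    _ = star s * (e * f) * s := by rw [mul_star_mul_self]

lemma conj_ss (s : S) : star s * (s * star s) * s = star s * s := by
  calc star s * (s * star s) * s = (star s * s * star s) * s := by
        simp only [mul_assoc]
    _ = star s * s := by rw [star_mul_star_self]

end InverseSemigroup

open InverseSemigroup

/-- The natural partial order on an inverse semigroup: `s ≤ t` iff `s = t·s*·s`. -/
def nle {S : Type*} [InverseSemigroup S] (s t : S) : Prop := s = t * (star s * s)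

/-- `σ(s) = σ(t)` iff `s·e = t·e` for some idempotent `e`. -/
def sigmaEq {S : Type*} [InverseSemigroup S] (s t : S) : Prop :=
  ∃ e : S, e * e = e ∧ s * e = t * e

/-- `S` is E-unitary if every element above a nonzero idempotent is idempotent. -/
def EUnitary (S : Type*) [InverseSemigroup S] : Prop :=
  ∀ e s : S, e * e = e → nle e s → s * s = s

/-- The semilattice of idempotents of an inverse semigroup. -/
def Idem (S : Type*) [InverseSemigroup S] : Type _ := {e : S // e * e = e}

instance {S : Type*} [InverseSemigroup S] : Mul (Idem S) :=
  ⟨fun e f => ⟨e.1 * f.1, idem_mul e.2 f.2⟩⟩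

/-- A semi-character of a semilattice. -/
structure SemiChar (E : Type*) [Mul E] where
  toFun : E → Bool
  map_mul' : ∀ e f : E, toFun (e * f) = (toFun e && toFun f)
  exists_true : ∃ e : E, toFun e = true

/-- The space `Ê` of semi-characters, with the subspace topology from `Bool^E`. -/
instance {E : Type*} [Mul E] : TopologicalSpace (SemiChar E) :=
  TopologicalSpace.induced (fun χ => χ.toFun) Pi.topologicalSpace

/-- For `e` idempotent, `s*·e·s` is idempotent. -/
def conjIdem {S : Type*} [InverseSemigroup S] (s : S) (e : Idem S) : Idem S :=
  ⟨star s * e.1 * s, idem_conj e.2 s⟩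

/-- The semi-character `s·χ` defined by `(s·χ)(e) = χ(s*·e·s)`. -/
def sDot {S : Type*} [InverseSemigroup S] (s : S) (χ : SemiChar (Idem S))
    (h : χ.toFun ⟨star s * s, idem_star_mul s⟩ = true) : SemiChar (Idem S) where
  toFun e := χ.toFun (conjIdem s e)
  map_mul' e f := by
    have heq : conjIdem s (e * f) = conjIdem s e * conjIdem s f :=
      Subtype.ext (conj_mul e.2 f.2 s).symm
    simp only [heq, χ.map_mul']
  exists_true := ⟨⟨s * star s, mul_star_idem s⟩, by
    have heq : conjIdem s ⟨s * star s, mul_star_idem s⟩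
        = (⟨star s * s, idem_star_mul s⟩ : Idem S) := Subtype.ext (conj_ss s)
    simp only [heq]; exact h⟩

section Aux

variable {S : Type*} [InverseSemigroup S]

lemma isg_inv_unique (a x y : S) (h1 : x * a * x = x) (h2 : a * x * a = a)
    (h3 : y * a * y = y) (h4 : a * y * a = a) : x = y := by
  have hxa : (x * a) * (x * a) = x * a := by
    calc (x * a) * (x * a) = (x * a * x) * a := by simp only [mul_assoc]
      _ = x * a := by rw [h1]
  have hya : (y * a) * (y * a) = y * a := by
    calc (y * a) * (y * a) = (y * a * y) * a := by simp only [mul_assoc]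
      _ = y * a := by rw [h3]
  have hax : (a * x) * (a * x) = a * x := by
    calc (a * x) * (a * x) = (a * x * a) * x := by simp only [mul_assoc]
      _ = a * x := by rw [h2]
  have hay : (a * y) * (a * y) = a * y := by
    calc (a * y) * (a * y) = (a * y * a) * y := by simp only [mul_assoc]
      _ = a * y := by rw [h4]
  have key1 : x = y * a * x := by
    calc x = x * a * x := h1.symm
      _ = x * (a * y * a) * x := by rw [h4]
      _ = ((x * a) * (y * a)) * x := by simp only [mul_assoc]
      _ = ((y * a) * (x * a)) * x := by rw [InverseSemigroup.idem_comm _ _ hxa hya]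
      _ = (y * a) * (x * a * x) := by simp only [mul_assoc]
      _ = (y * a) * x := by rw [h1]
      _ = y * a * x := rfl
  have key2 : y = y * a * x := by
    calc y = y * a * y := h3.symm
      _ = y * (a * x * a) * y := by rw [h2]
      _ = y * ((a * x) * (a * y)) := by simp only [mul_assoc]
      _ = y * ((a * y) * (a * x)) := by rw [InverseSemigroup.idem_comm _ _ hax hay]
      _ = (y * a * y) * (a * x) := by simp only [mul_assoc]
      _ = y * (a * x) := by rw [h3]
      _ = y * a * x := (mul_assoc _ _ _).symm
  exact key1.trans key2.symm

lemma star_idem {e : S} (he : e * e = e) : star e = e := by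
  have h3 : e * e * e = e := by rw [he, he]
  exact isg_inv_unique e (star e) e (InverseSemigroup.star_mul_star_self e)
    (InverseSemigroup.mul_star_mul_self e) h3 h3

lemma star_mul_idem_self (s g : S) (hg : g * g = g) :
    star (s * g) * (s * g) = (star s * s) * g := by
  have hcomm : (star s * s) * g = g * (star s * s) :=
    InverseSemigroup.idem_comm _ _ (idem_star_mul s) hg
  calc star (s * g) * (s * g) = (g * star s) * (s * g) := by
        rw [star_mul, star_idem hg]
    _ = g * ((star s * s) * g) := by simp only [mul_assoc]
    _ = g * (g * (star s * s)) := by rw [hcomm]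
    _ = (g * g) * (star s * s) := by rw [← mul_assoc]
    _ = g * (star s * s) := by rw [hg]
    _ = (star s * s) * g := hcomm.symm

lemma nle_mul_idem (s g : S) (hg : g * g = g) : nle (s * g) s := by
  show s * g = s * (star (s * g) * (s * g))
  rw [star_mul_idem_self s g hg]
  calc s * g = (s * star s * s) * g := by rw [InverseSemigroup.mul_star_mul_self]
    _ = s * ((star s * s) * g) := by simp only [mul_assoc]

lemma auxD (w G X : S) (hw : w * w = w) (hG : G * G = G) (_hX : X * X = X)
    (hGX : G * X = G) (hXw : X = w * X) : G = w * G := by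
  calc G = G * X := hGX.symm
    _ = G * (w * X) := by rw [← hXw]
    _ = (G * w) * X := (mul_assoc _ _ _).symm
    _ = (w * G) * X := by rw [InverseSemigroup.idem_comm _ _ hG hw]
    _ = w * (G * X) := mul_assoc _ _ _
    _ = w * G := by rw [hGX]

lemma auxC (a t v G : S) (hG2 : G * G = G)
    (hv1 : v = a * (star v * v)) (hv2 : v = t * (star v * v))
    (hG : G = (star v * v) * G) :
    a * G = t * (star (a * G) * (a * G)) := by
  have hw : (star v * v) * (star v * v) = star v * v := idem_star_mul v
  have hA : (star a * a) * (star a * a) = star a * a := idem_star_mul a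
  have hvA : v * (star a * a) = v := by
    conv_lhs => rw [hv1]
    conv_rhs => rw [hv1]
    calc (a * (star v * v)) * (star a * a)
        = a * ((star v * v) * (star a * a)) := mul_assoc _ _ _
      _ = a * ((star a * a) * (star v * v)) := by
          rw [InverseSemigroup.idem_comm _ _ hw hA]
      _ = (a * (star a * a)) * (star v * v) := (mul_assoc _ _ _).symm
      _ = (a * star a * a) * (star v * v) := by rw [← mul_assoc a (star a) a]
      _ = a * (star v * v) := by rw [InverseSemigroup.mul_star_mul_self]
  have key : (star a * a) * G = (star v * v) * ((star a * a) * G) := by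
    calc (star a * a) * G = (star a * a) * ((star v * v) * G) := by rw [← hG]
      _ = ((star a * a) * (star v * v)) * G := (mul_assoc _ _ _).symm
      _ = ((star v * v) * (star a * a)) * G := by
          rw [InverseSemigroup.idem_comm _ _ hA hw]
      _ = (star v * v) * ((star a * a) * G) := mul_assoc _ _ _
  rw [star_mul_idem_self a G hG2]
  calc a * G = a * ((star v * v) * G) := by rw [← hG]
    _ = (a * (star v * v)) * G := (mul_assoc _ _ _).symm
    _ = v * G := by rw [← hv1]
    _ = (v * (star a * a)) * G := by rw [hvA]
    _ = v * ((star a * a) * G) := mul_assoc _ _ _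
    _ = (t * (star v * v)) * ((star a * a) * G) := by rw [← hv2]
    _ = t * ((star v * v) * ((star a * a) * G)) := mul_assoc _ _ _
    _ = t * ((star a * a) * G) := by rw [← key]

end Aux


theorem stmt15 {S T : Type*} [InverseSemigroup S] [InverseSemigroup T]
    (φ : S → T) (hhom : ∀ x y : S, φ (x * y) = φ x * φ y)
    (hstar : ∀ x : S, φ (star x) = star (φ x))
    (e f : S) (he : e * e = e) (hf : f * f = f) (s : S) (t : T)
    (χ : SemiChar (Idem S))
    (hχs : χ.toFun ⟨star s * s, idem_star_mul s⟩ = true)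
    (hχf : χ.toFun ⟨f, hf⟩ = true)
    (hχe : χ.toFun (conjIdem s ⟨e, he⟩) = true)
    (hv : ∃ v : T, nle v (φ s) ∧ nle v t ∧
      ∃ x : Idem S, χ.toFun x = true ∧ nle (φ x.1) (star v * v)) :
    ∃ s' : S, nle s' s ∧ s' = e * s' * f ∧
      χ.toFun ⟨star s' * s', idem_star_mul s'⟩ = true ∧ nle (φ s') t := by
  obtain ⟨v, hv1, hv2, x, hχx, hxle⟩ := hv
  have hn : (star s * e * s) * (star s * e * s) = star s * e * s := idem_conj he s
  have hg : ((star s * e * s) * x.1 * f) * ((star s * e * s) * x.1 * f)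
      = (star s * e * s) * x.1 * f := idem_mul (idem_mul hn x.2) hf
  refine ⟨s * ((star s * e * s) * x.1 * f), nle_mul_idem s _ hg, ?_, ?_, ?_⟩
  · -- s' = e * s' * f
    have hsn : s * (star s * e * s) = e * s := by
      have hc : (s * star s) * e = e * (s * star s) :=
        InverseSemigroup.idem_comm _ _ (mul_star_idem s) he
      calc s * (star s * e * s) = ((s * star s) * e) * s := by simp only [mul_assoc]
        _ = (e * (s * star s)) * s := by rw [hc]
        _ = e * (s * star s * s) := by simp only [mul_assoc]
        _ = e * s := by rw [InverseSemigroup.mul_star_mul_self]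
    calc s * ((star s * e * s) * x.1 * f)
        = (s * (star s * e * s)) * (x.1 * f) := by simp only [mul_assoc]
      _ = (e * s) * (x.1 * f) := by rw [hsn]
      _ = ((e * e) * s) * (x.1 * (f * f)) := by rw [he, hf]
      _ = e * ((e * s) * (x.1 * f)) * f := by simp only [mul_assoc]
      _ = e * ((s * (star s * e * s)) * (x.1 * f)) * f := by rw [hsn]
      _ = e * (s * ((star s * e * s) * x.1 * f)) * f := by simp only [mul_assoc]
  · -- character condition
    have hidem_eq : (⟨star (s * ((star s * e * s) * x.1 * f)) *
          (s * ((star s * e * s) * x.1 * f)),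
          idem_star_mul (s * ((star s * e * s) * x.1 * f))⟩ : Idem S)
        = ⟨star s * s, idem_star_mul s⟩ * (conjIdem s ⟨e, he⟩ * (x * ⟨f, hf⟩)) := by
      apply Subtype.ext
      show star (s * ((star s * e * s) * x.1 * f)) * (s * ((star s * e * s) * x.1 * f))
          = (star s * s) * ((star s * e * s) * (x.1 * f))
      rw [star_mul_idem_self s _ hg]
      simp only [mul_assoc]
    rw [hidem_eq]; erw [χ.map_mul', χ.map_mul', χ.map_mul', hχs, hχe, hχx, hχf]
    rfl
  · -- nle (φ s') t
    have hXidem : φ x.1 * φ x.1 = φ x.1 := by rw [← hhom, x.2]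
    have hGidem : φ ((star s * e * s) * x.1 * f) * φ ((star s * e * s) * x.1 * f)
        = φ ((star s * e * s) * x.1 * f) := by rw [← hhom, hg]
    have hgx : ((star s * e * s) * x.1 * f) * x.1 = (star s * e * s) * x.1 * f := by
      have hfx : f * x.1 = x.1 * f := InverseSemigroup.idem_comm f x.1 hf x.2
      calc ((star s * e * s) * x.1 * f) * x.1
          = (star s * e * s) * (x.1 * (f * x.1)) := by simp only [mul_assoc]
        _ = (star s * e * s) * (x.1 * (x.1 * f)) := by rw [hfx]
        _ = (star s * e * s) * ((x.1 * x.1) * f) := by rw [← mul_assoc x.1 x.1 f]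
        _ = (star s * e * s) * (x.1 * f) := by rw [x.2]
        _ = (star s * e * s) * x.1 * f := (mul_assoc _ _ _).symm
    have hGX : φ ((star s * e * s) * x.1 * f) * φ x.1
        = φ ((star s * e * s) * x.1 * f) := by rw [← hhom, hgx]
    have hxle' : φ x.1 = (star v * v) * (star (φ x.1) * φ x.1) := hxle
    have hXw : φ x.1 = (star v * v) * φ x.1 := by
      calc φ x.1 = (star v * v) * (star (φ x.1) * φ x.1) := hxle'
        _ = (star v * v) * (φ x.1 * φ x.1) := by rw [star_idem hXidem]
        _ = (star v * v) * φ x.1 := by rw [hXidem]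
    have hG : φ ((star s * e * s) * x.1 * f)
        = (star v * v) * φ ((star s * e * s) * x.1 * f) :=
      auxD (star v * v) _ (φ x.1) (idem_star_mul v) hGidem hXidem hGX hXw
    have hv1' : v = φ s * (star v * v) := hv1
    have hv2' : v = t * (star v * v) := hv2
    show φ (s * ((star s * e * s) * x.1 * f))
        = t * (star (φ (s * ((star s * e * s) * x.1 * f))) *
            φ (s * ((star s * e * s) * x.1 * f)))
    rw [hhom s ((star s * e * s) * x.1 * f)]
    exact auxC (φ s) t v _ hGidem hv1' hv2' hG
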